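/- Let E be a graph and let p = (e₁,…,e_n) be a path of length n ≥ 2 in E. If there exists a permutation σ of {1,…,n} with σ ≠ id such that (e_{σ(1)},…,e_{σ(n)}) is again a path in E, then E contains a loop. -/

import Mathlib

/-- A directed graph (quiver): a set of vertices, a set of edges, and
source/target maps. -/
structure DGraph where
  V : Type
  E : Type
  s : E → V
  t : E → V

/-- `p : Fin k → G.E` is a path of length `k` iff consecutive edges are composable. -/
def DGraph.IsPath (G : DGraph) {k : ℕ} (p : Fin k → G.E) : Prop :=
  ∀ (i : ℕ) (h : i + 1 < k), G.t (p ⟨i, Nat.lt_of_succ_lt h⟩) = G.s (p ⟨i + 1, h⟩)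

/-- A graph has a loop iff it admits a path of positive length whose source
equals its target. -/
def DGraph.HasLoop (G : DGraph) : Prop :=
  ∃ (k : ℕ) (p : Fin (k + 1) → G.E), G.IsPath p ∧ G.s (p 0) = G.t (p (Fin.last k))

/-- If a segment `p a, …, p b` of a path starts at the vertex it ends at, we get a loop. -/
lemma loop_of_seg (G : DGraph) {n : ℕ} (p : Fin n → G.E) (hp : G.IsPath p)
    (a b : ℕ) (hab : a ≤ b) (hb : b < n)
    (h : G.s (p ⟨a, lt_of_le_of_lt hab hb⟩) = G.t (p ⟨b, hb⟩)) : G.HasLoop := by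
  refine ⟨b - a, fun j => p ⟨a + j, by have := j.isLt; omega⟩, ?_, ?_⟩
  · intro i hi
    have h1 : a + i + 1 < n := by omega
    have := hp (a + i) h1
    convert this using 3
    exact Fin.ext (show a + (i + 1) = a + i + 1 by omega)
  · convert h using 3 <;>
      exact Fin.ext (by simp only [Fin.val_zero, Fin.val_last]; omega)

lemma loop_of_same_source (G : DGraph) {n : ℕ} (p : Fin n → G.E) (hp : G.IsPath p)
    (a b : ℕ) (hab : a < b) (hb : b < n)
    (h : G.s (p ⟨a, lt_trans hab hb⟩) = G.s (p ⟨b, hb⟩)) : G.HasLoop := by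
  have hb1 : b - 1 + 1 < n := by omega
  have ht := hp (b - 1) hb1
  have e2 : (⟨b - 1 + 1, hb1⟩ : Fin n) = ⟨b, hb⟩ := Fin.ext (show b - 1 + 1 = b by omega)
  rw [e2] at ht
  exact loop_of_seg G p hp a (b - 1) (by omega) (by omega) (h.trans ht.symm)

/-- if the edges of a path of length at least 2 can be rearranged by a
non-identity permutation into a path, then the graph contains a loop. -/
theorem stmt_1 (G : DGraph) (n : ℕ) (hn : 2 ≤ n) (p : Fin n → G.E)
    (hp : G.IsPath p) (σ : Equiv.Perm (Fin n)) (hσ : σ ≠ Equiv.refl (Fin n))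
    (hpσ : G.IsPath (p ∘ σ)) : G.HasLoop := by
  by_contra hL
  -- key: σ(i+1) = σ(i) + 1
  have key : ∀ (i : ℕ) (hi : i + 1 < n),
      ((σ ⟨i + 1, hi⟩ : Fin n) : ℕ) = ((σ ⟨i, Nat.lt_of_succ_lt hi⟩ : Fin n) : ℕ) + 1 := by
    intro i hi
    set a := σ ⟨i, Nat.lt_of_succ_lt hi⟩ with ha
    set b := σ ⟨i + 1, hi⟩ with hbdef
    have hedge : G.t (p a) = G.s (p b) := hpσ i hi
    by_cases hlast : (a : ℕ) + 1 < n
    · -- t (p a) = s (p (a+1))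
      have hstep : G.t (p a) = G.s (p ⟨(a : ℕ) + 1, hlast⟩) := by
        have := hp (a : ℕ) hlast
        convert this using 3
      by_contra hne
      have hne' : (b : ℕ) ≠ (a : ℕ) + 1 := fun hcon => hne (by omega)
      have hsame : G.s (p ⟨(a : ℕ) + 1, hlast⟩) = G.s (p b) := by rw [← hstep, hedge]
      rcases lt_or_gt_of_ne hne' with hlt | hgt
      · exact hL (loop_of_same_source G p hp (b : ℕ) ((a : ℕ) + 1) hlt hlast
          (by rw [Fin.eta]; exact hsame.symm))
      · exact hL (loop_of_same_source G p hp ((a : ℕ) + 1) (b : ℕ) hgt b.isLt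
          (by rw [Fin.eta]; exact hsame))
    · -- a is the last edge: s (p b) = t (p ⟨n-1⟩), loop
      have han : (a : ℕ) = n - 1 := by have := a.isLt; omega
      exact absurd (loop_of_seg G p hp (b : ℕ) ((a : ℕ)) (by have := b.isLt; omega) a.isLt
        (by rw [Fin.eta, Fin.eta]; exact hedge.symm)) hL
  have step : ∀ (i : ℕ) (hi : i < n),
      ((σ ⟨i, hi⟩ : Fin n) : ℕ) = ((σ ⟨0, by omega⟩ : Fin n) : ℕ) + i := by
    intro i
    induction i with
    | zero => intro hi; rfl
    | succ j ih =>
      intro hi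
      rw [key j hi, ih (by omega)]
      omega
  have hlastv : ((σ ⟨n - 1, by omega⟩ : Fin n) : ℕ) = ((σ ⟨0, by omega⟩ : Fin n) : ℕ) + (n - 1) :=
    step (n - 1) (by omega)
  have h0 : ((σ ⟨0, by omega⟩ : Fin n) : ℕ) = 0 := by
    have := (σ ⟨n - 1, by omega⟩).isLt; omega
  apply hσ
  ext x
  have hx := step (x : ℕ) x.isLt
  rw [h0] at hx
  simp only [Equiv.refl_apply]
  have hxx : σ ⟨(x : ℕ), x.isLt⟩ = σ x := congrArg σ (Fin.eta x x.isLt)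
  rw [hxx] at hx
  omega
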